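/- Let A be a nontrivial subgroup of a group B and let b ∈ B be transcendental over A. Then the subgroup of B generated by the conjugates A^{b^i}, i ∈ ℤ, is naturally isomorphic to the free product of the groups A^{b^i} over i ∈ ℤ. -/

import Mathlib

open Monoid SemidirectProduct

section Aux

variable {B : Type*} [Group B] (A : Subgroup B)

/-- Free product of ℤ-indexed copies of A. -/
private abbrev NN (A : Subgroup B) := Monoid.CoprodI (fun _ : ℤ => A)

private def shiftHom (n : ℤ) : NN A →* NN A :=
  Monoid.CoprodI.lift (fun i => (Monoid.CoprodI.of (i := i - n) : _ →* NN A))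

private lemma shiftHom_of (n i : ℤ) (a : A) :
    shiftHom A n (Monoid.CoprodI.of (i := i) a) = Monoid.CoprodI.of (i := i - n) a :=
  Monoid.CoprodI.lift_of _ _

private def shiftE : NN A ≃* NN A :=
  MonoidHom.toMulEquiv (shiftHom A 1) (shiftHom A (-1))
    (by
      apply Monoid.CoprodI.ext_hom
      intro i
      ext a
      simp [shiftHom_of])
    (by
      apply Monoid.CoprodI.ext_hom
      intro i
      ext a
      simp [shiftHom_of])

private lemma shiftE_pow (n : ℤ) (i : ℤ) (a : A) :
    ((shiftE A ^ n : NN A ≃* NN A)) (Monoid.CoprodI.of (i := i) a)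
      = Monoid.CoprodI.of (i := i - n) a := by
  induction n using Int.induction_on generalizing i with
  | zero => simp
  | succ n ih =>
      have : (shiftE A ^ ((n : ℤ) + 1)) = (shiftE A ^ (n : ℤ)) * shiftE A := by
        rw [zpow_add_one]
      rw [this]
      show (shiftE A ^ (n:ℤ)) (shiftE A (Monoid.CoprodI.of (i := i) a)) = _
      have h1 : shiftE A (Monoid.CoprodI.of (i := i) a)
          = Monoid.CoprodI.of (i := i - 1) a := shiftHom_of A 1 i a
      rw [h1, ih]
      congr 1
      ring_nf
  | pred n ih =>
      have : (shiftE A ^ (-(n : ℤ) - 1)) = (shiftE A ^ (-(n : ℤ))) * (shiftE A)⁻¹ := by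
        rw [zpow_sub_one]
      rw [this]
      show (shiftE A ^ (-(n:ℤ))) ((shiftE A)⁻¹ (Monoid.CoprodI.of (i := i) a)) = _
      have h1 : (shiftE A)⁻¹ (Monoid.CoprodI.of (i := i) a)
          = Monoid.CoprodI.of (i := i + 1) a := by
        show (shiftE A).symm _ = _
        exact shiftHom_of A (-1) i a |>.trans (by norm_num)
      rw [h1, ih]
      congr 1
      ring_nf

private def sigmaA : Multiplicative ℤ →* MulAut (NN A) := zpowersHom _ (shiftE A)

private abbrev GG (A : Subgroup B) := NN A ⋊[sigmaA A] Multiplicative ℤ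

private def theta : Monoid.Coprod A (Multiplicative ℤ) →* GG A :=
  Monoid.Coprod.lift
    ((SemidirectProduct.inl : NN A →* GG A).comp (Monoid.CoprodI.of (M := fun _ : ℤ => A) (i := (0 : ℤ))))
    (SemidirectProduct.inr : Multiplicative ℤ →* GG A)

private def phi0 : NN A →* Monoid.Coprod A (Multiplicative ℤ) :=
  Monoid.CoprodI.lift (fun i =>
    ((MulAut.conj (Monoid.Coprod.inr (Multiplicative.ofAdd (-i)) :
        Monoid.Coprod A (Multiplicative ℤ))).toMonoidHom).comp Monoid.Coprod.inl)

private lemma theta_comp_phi0 :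
    (theta A).comp (phi0 A) = (SemidirectProduct.inl : NN A →* GG A) := by
  apply Monoid.CoprodI.ext_hom
  intro i
  refine MonoidHom.ext fun a => ?_
  simp only [MonoidHom.comp_apply]
  rw [phi0, Monoid.CoprodI.lift_of]
  simp only [MonoidHom.comp_apply, MulEquiv.coe_toMonoidHom, MulAut.conj_apply]
  rw [map_mul, map_mul, map_inv, theta, Monoid.Coprod.lift_apply_inl,
    Monoid.Coprod.lift_apply_inr]
  simp only [MonoidHom.comp_apply]
  rw [← map_inv, ← SemidirectProduct.inl_aut]
  congr 1
  have hs : sigmaA A (Multiplicative.ofAdd (-i)) = (shiftE A ^ (-i) : MulAut (NN A)) := rfl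
  rw [hs]
  have := shiftE_pow A (-i) 0 a
  rw [show ((shiftE A ^ (-i) : MulAut (NN A)) : NN A ≃* NN A) = (shiftE A ^ (-i) : NN A ≃* NN A) from rfl] at *
  rw [this]
  norm_num

private lemma phi0_injective : Function.Injective (phi0 A) := by
  have h := theta_comp_phi0 A
  intro x y hxy
  apply SemidirectProduct.inl_injective (φ := sigmaA A)
  have hx := congrArg (fun f : NN A →* GG A => f x) h
  have hy := congrArg (fun f : NN A →* GG A => f y) h
  simp only [MonoidHom.comp_apply] at hx hy
  rw [← hx, ← hy, hxy]

end Aux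

theorem transcendental_implies_free_product_of_conjugates
    {B : Type*} [Group B] (A : Subgroup B) (hA : A ≠ ⊥) (b : B)
    (h : Function.Injective (Monoid.Coprod.lift A.subtype (zpowersHom B b))) :
    Function.Injective
      (Monoid.CoprodI.lift (fun i : ℤ =>
        ((MulAut.conj (b ^ (-i))).toMonoidHom.comp A.subtype :
          (fun _ : ℤ => A) i →* B))) := by
  have key : (Monoid.CoprodI.lift (fun i : ℤ =>
        ((MulAut.conj (b ^ (-i))).toMonoidHom.comp A.subtype :
          (fun _ : ℤ => A) i →* B)))
      = (Monoid.Coprod.lift A.subtype (zpowersHom B b)).comp (phi0 A) := by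
    apply Monoid.CoprodI.ext_hom
    intro i
    ext a
    show MulAut.conj (b ^ (-i)) (A.subtype a)
        = Monoid.Coprod.lift A.subtype (zpowersHom B b) (phi0 A (Monoid.CoprodI.of (i := i) a))
    rw [phi0, Monoid.CoprodI.lift_of]
    show _ = Monoid.Coprod.lift A.subtype (zpowersHom B b)
        (Monoid.Coprod.inr (Multiplicative.ofAdd (-i)) * Monoid.Coprod.inl a *
          (Monoid.Coprod.inr (Multiplicative.ofAdd (-i)))⁻¹)
    rw [map_mul, map_mul, map_inv, Monoid.Coprod.lift_apply_inr, Monoid.Coprod.lift_apply_inl]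
    rw [MulAut.conj_apply, zpowersHom_apply]
    rfl
  rw [key]
  exact h.comp (phi0_injective A)
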